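/- For every rank-labeled tree of size s whose root has rank r ≥ 2, one has (r : ℝ) ≤ log_φ(s) + 2, where φ = (1 + √5)/2 is the golden ratio and log_φ denotes the logarithm to base φ. -/

import Mathlib

/-- `cdiv2 m` is the ceiling of `m / 2` for an integer `m`. -/
def cdiv2 (m : ℤ) : ℤ := ⌈(m : ℚ) / 2⌉

/-- A rooted tree in which every node carries an integer rank and an
ordered finite list of child subtrees. -/
inductive RTree : Type
  | node : ℤ → List RTree → RTree

/-- The rank of the root of a tree. -/
def RTree.rank : RTree → ℤ
  | .node r _ => r

mutual
  /-- The size of a tree: its total number of nodes. -/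
  def RTree.size : RTree → ℕ
    | .node _ cs => 1 + RTree.sizeList cs
  /-- The total number of nodes of a list of trees. -/
  def RTree.sizeList : List RTree → ℕ
    | [] => 0
    | t :: ts => RTree.size t + RTree.sizeList ts
end

/-- The rank of the `(i+1)`-st child from the end of the child list `cs`
(so `i = 0` gives the last child, `i = 1` the second to last), with the
convention that the rank of a missing child is `-1`. -/
def lastRank (cs : List RTree) (i : ℕ) : ℤ :=
  (cs.reverse[i]?).elim (-1) RTree.rank

/-- A rank-labeled tree: every node `z` satisfies `r_z ≥ 0` and
`r_z ≤ ⌈(r_{z1} + r_{z2})/2⌉ + 1` where `r_{z1}`, `r_{z2}` are the ranks of the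
last two children (a missing child having rank `-1`). -/
inductive RTree.Valid : RTree → Prop
  | node (r : ℤ) (cs : List RTree)
      (hr : 0 ≤ r)
      (hrank : r ≤ cdiv2 (lastRank cs 0 + lastRank cs 1) + 1)
      (hcs : ∀ t ∈ cs, RTree.Valid t) :
      RTree.Valid (RTree.node r cs)

noncomputable def phi : ℝ := (1 + Real.sqrt 5) / 2

lemma sqrt5_sq : Real.sqrt 5 ^ 2 = 5 := Real.sq_sqrt (by norm_num)

lemma one_lt_phi : 1 < phi := by
  have : (1:ℝ) < Real.sqrt 5 := by
    have := Real.lt_sqrt (x := 1) (y := 5) (by norm_num)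
    rw [this]; norm_num
  unfold phi; linarith

lemma phi_pos : 0 < phi := lt_trans one_pos one_lt_phi

lemma phi_sq : phi ^ (2:ℤ) = phi + 1 := by
  have h := sqrt5_sq
  rw [show (2:ℤ) = ((2:ℕ):ℤ) from rfl, zpow_natCast]
  unfold phi
  nlinarith [h]

lemma phi_split (r : ℤ) : phi ^ (r - 2) = phi ^ (r - 3) + phi ^ (r - 4) := by
  have hne : phi ≠ 0 := ne_of_gt phi_pos
  have h1 : phi ^ (r - 2) = phi ^ (r - 4) * phi ^ (2:ℤ) := by
    rw [← zpow_add₀ hne]; ring_nf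
  have h2 : phi ^ (r - 3) = phi ^ (r - 4) * phi ^ (1:ℤ) := by
    rw [← zpow_add₀ hne]; ring_nf
  rw [h1, h2, phi_sq, zpow_one]; ring

lemma key_aux (a b r : ℤ) (hba : b ≤ a) (hab : 2 * r - 3 ≤ a + b) :
    phi ^ (r - 2) ≤ phi ^ (a - 2) + phi ^ (b - 2) := by
  have hb0 : (0:ℝ) < phi ^ (b - 2) := zpow_pos phi_pos _
  rcases le_or_gt r a with hra | hra
  · have : phi ^ (r - 2) ≤ phi ^ (a - 2) :=
      zpow_le_zpow_right₀ one_lt_phi.le (by omega)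
    linarith
  · have ha : r - 1 ≤ a := by omega
    have hb : r - 2 ≤ b + 1 := by omega
    have h1 : phi ^ (r - 3) ≤ phi ^ (a - 2) :=
      zpow_le_zpow_right₀ one_lt_phi.le (by omega)
    have h2 : phi ^ (r - 4) ≤ phi ^ (b - 2) :=
      zpow_le_zpow_right₀ one_lt_phi.le (by omega)
    rw [phi_split]
    linarith

lemma key (a b r : ℤ) (hab : 2 * r - 3 ≤ a + b) :
    phi ^ (r - 2) ≤ phi ^ (a - 2) + phi ^ (b - 2) := by
  rcases le_total b a with h | h
  · exact key_aux a b r h hab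
  · have := key_aux b a r h (by omega); linarith

lemma cdiv2_bound (m k : ℤ) (h : k ≤ cdiv2 m) : 2 * k - 1 ≤ m := by
  by_contra hc
  push_neg at hc
  have : cdiv2 m ≤ k - 1 := by
    unfold cdiv2
    rw [Int.ceil_le]
    rw [div_le_iff₀ (by norm_num)]
    push_cast
    have : m ≤ 2 * k - 2 := by omega
    exact_mod_cast by push_cast; linarith
  omega

lemma size_le_sizeList : ∀ (l : List RTree) (t : RTree), t ∈ l → t.size ≤ RTree.sizeList l := by
  intro l
  induction l with
  | nil => intro t ht; simp at ht
  | cons c cs ih =>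
    intro t ht
    rcases List.mem_cons.mp ht with h | h
    · subst h; simp [RTree.sizeList]
    · have := ih t h; simp [RTree.sizeList]; omega

lemma sizeList_append : ∀ (l₁ l₂ : List RTree),
    RTree.sizeList (l₁ ++ l₂) = RTree.sizeList l₁ + RTree.sizeList l₂ := by
  intro l₁
  induction l₁ with
  | nil => intro l₂; simp [RTree.sizeList]
  | cons c cs ih => intro l₂; simp [RTree.sizeList, ih]; omega

lemma sizeList_reverse : ∀ (l : List RTree), RTree.sizeList l.reverse = RTree.sizeList l := by
  intro l
  induction l with
  | nil => rfl
  | cons c cs ih =>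
    simp [List.reverse_cons, sizeList_append, RTree.sizeList, ih]; omega

lemma valid_rank_nonneg (t : RTree) (h : t.Valid) : 0 ≤ t.rank := by
  cases h with
  | node r cs hr hrank hcs => exact hr

lemma size_pos (t : RTree) : 1 ≤ t.size := by
  cases t with
  | node r cs => simp [RTree.size]

lemma size_ge : ∀ (n : ℕ) (t : RTree), t.size ≤ n → t.Valid →
    phi ^ (t.rank - 2) ≤ (t.size : ℝ) := by
  intro n
  induction n with
  | zero => intro t ht _; have := size_pos t; omega
  | succ n ih =>
    intro t ht hv
    cases hv with
    | node r cs hr hrank hcs =>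
      simp only [RTree.rank]
      rcases le_or_gt r 1 with hr1 | hr1
      · have h1 : phi ^ (r - 2) ≤ phi ^ (0:ℤ) :=
          zpow_le_zpow_right₀ one_lt_phi.le (by omega)
        have h2 : (1:ℝ) ≤ ((RTree.node r cs).size : ℝ) := by
          exact_mod_cast size_pos _
        rw [zpow_zero] at h1; linarith
      · -- r ≥ 2
        have hsum : 2 * r - 3 ≤ lastRank cs 0 + lastRank cs 1 := by
          have := cdiv2_bound (lastRank cs 0 + lastRank cs 1) (r - 1) (by omega)
          omega
        have hsz : (RTree.node r cs).size = 1 + RTree.sizeList cs := rfl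
        rcases hrev : cs.reverse with _ | ⟨c1, rest1⟩
        · exfalso
          have : lastRank cs 0 = -1 ∧ lastRank cs 1 = -1 := by
            constructor <;> simp [lastRank, hrev]
          omega
        · have hc1mem : c1 ∈ cs := by
            have : c1 ∈ cs.reverse := by rw [hrev]; simp
            exact List.mem_reverse.mp this
          have hc1v := hcs c1 hc1mem
          have hc1sz : c1.size ≤ RTree.sizeList cs := size_le_sizeList cs c1 hc1mem
          have hc1ih : phi ^ (c1.rank - 2) ≤ (c1.size : ℝ) := by
            apply ih c1 (by rw [hsz] at ht; omega) hc1v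
          have hr1rank : lastRank cs 0 = c1.rank := by simp [lastRank, hrev]
          rcases rest1 with _ | ⟨c2, rest⟩
          · -- single child
            have hr2 : lastRank cs 1 = -1 := by simp [lastRank, hrev]
            have hrk : 2 * r - 2 ≤ c1.rank := by omega
            have h1 : phi ^ (r - 2) ≤ phi ^ (c1.rank - 2) :=
              zpow_le_zpow_right₀ one_lt_phi.le (by omega)
            have h2 : (c1.size : ℝ) ≤ ((RTree.node r cs).size : ℝ) := by
              have : c1.size ≤ (RTree.node r cs).size := by rw [hsz]; omega
              exact_mod_cast this
            linarith
          · -- two children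
            have hc2mem : c2 ∈ cs := by
              have : c2 ∈ cs.reverse := by rw [hrev]; simp
              exact List.mem_reverse.mp this
            have hc2v := hcs c2 hc2mem
            have hc2ih : phi ^ (c2.rank - 2) ≤ (c2.size : ℝ) := by
              apply ih c2 ?_ hc2v
              have := size_le_sizeList cs c2 hc2mem
              rw [hsz] at ht; omega
            have hr2rank : lastRank cs 1 = c2.rank := by simp [lastRank, hrev]
            have hkey : phi ^ (r - 2) ≤ phi ^ (c1.rank - 2) + phi ^ (c2.rank - 2) :=
              key c1.rank c2.rank r (by omega)
            have hsizes : c1.size + c2.size ≤ RTree.sizeList cs := by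
              have h1 : RTree.sizeList cs = RTree.sizeList cs.reverse :=
                (sizeList_reverse cs).symm
              rw [h1, hrev]
              simp [RTree.sizeList]
              try omega
            have h2 : (c1.size : ℝ) + (c2.size : ℝ) ≤ ((RTree.node r cs).size : ℝ) := by
              have : c1.size + c2.size ≤ (RTree.node r cs).size := by rw [hsz]; omega
              exact_mod_cast this
            linarith

/-- The corollary to the structural lemma: for a rank-labeled tree of size `s`
whose root has rank `r ≥ 2`, one has `r ≤ log_φ s + 2`. -/
theorem rank_le_log_size (t : RTree) (h : t.Valid) (hr : 2 ≤ t.rank) :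
    (t.rank : ℝ) ≤ Real.logb ((1 + Real.sqrt 5) / 2) (t.size : ℝ) + 2 := by
  have hs : phi ^ (t.rank - 2) ≤ (t.size : ℝ) := size_ge t.size t le_rfl h
  have hφ : 1 < phi := one_lt_phi
  have hpos : (0:ℝ) < phi ^ (t.rank - 2) := zpow_pos phi_pos _
  have hmono : Real.logb phi (phi ^ (t.rank - 2)) ≤ Real.logb phi (t.size : ℝ) :=
    Real.logb_le_logb_of_le hφ hpos hs
  have hlog : Real.logb phi (phi ^ (t.rank - 2)) = ((t.rank : ℝ) - 2) := by
    rw [Real.logb, Real.log_zpow]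
    have : Real.log phi ≠ 0 := ne_of_gt (Real.log_pos hφ)
    field_simp
    push_cast; ring
  rw [hlog] at hmono
  have : Real.logb phi (t.size : ℝ) = Real.logb ((1 + Real.sqrt 5) / 2) (t.size : ℝ) := rfl
  linarith [hmono, this ▸ hmono]
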